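/- Let T be a tree rooted at a vertex r, let h = max_{v} dist(r,v) with h ≥ 3, and let S be a minimum independent ve-dominating set of T containing no leaf. Suppose u ∈ S satisfies dist(r,u) = h−1, every other vertex v ∈ S \ {u} satisfies dist(u,v) ≥ 3, and let w be the (unique) neighbour of u with dist(r,w) = h−2. Then (S \ {u}) ∪ {w} is also a minimum independent ve-dominating set of T containing no leaf. -/

import Mathlib

variable {V : Type*} [Fintype V] [DecidableEq V]

/-- A vertex `u` ve-dominates an edge `e` if `e` is incident to some vertex of `N[u]`. -/
def veDominates (G : SimpleGraph V) (u : V) (e : Sym2 V) : Prop :=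
  ∃ x ∈ e, x = u ∨ G.Adj u x

/-- `S` is a ve-dominating set: every edge is ve-dominated by some vertex of `S`. -/
def IsVEDomSet (G : SimpleGraph V) (S : Finset V) : Prop :=
  ∀ e ∈ G.edgeSet, ∃ u ∈ S, veDominates G u e

/-- `S` is an independent set. -/
def IsIndepSet (G : SimpleGraph V) (S : Finset V) : Prop :=
  ∀ u ∈ S, ∀ v ∈ S, ¬ G.Adj u v

/-- The ve-domination number `γ_ve(G)`. -/
noncomputable def gammaVE (G : SimpleGraph V) : ℕ :=
  sInf {n | ∃ S : Finset V, IsVEDomSet G S ∧ S.card = n}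

/-- The independent ve-domination number `i_ve(G)`. -/
noncomputable def iVE (G : SimpleGraph V) : ℕ :=
  sInf {n | ∃ S : Finset V, IsVEDomSet G S ∧ IsIndepSet G S ∧ S.card = n}



/-- On a shortest walk from `r` to `a`, any support vertex `b` with
`dist r a ≤ dist r b` must be the endpoint `a`. -/
lemma mem_support_shortest_eq {G : SimpleGraph V} (hc : G.Connected) {r a b : V}
    (p : G.Walk r a) (hp : p.length = G.dist r a) (hb : b ∈ p.support)
    (hd : G.dist r a ≤ G.dist r b) : b = a := by
  have h1 : G.dist r b ≤ (p.takeUntil b hb).length := SimpleGraph.dist_le _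
  have hspec := congr_arg SimpleGraph.Walk.length (p.take_spec hb)
  rw [SimpleGraph.Walk.length_append] at hspec
  have hle : (p.takeUntil b hb).length ≤ p.length := p.length_takeUntil_le hb
  have : (p.dropUntil b hb).length = 0 := by omega
  exact (SimpleGraph.Walk.eq_of_length_eq_zero this)

/-- Path obtained by appending an edge to a shortest walk. -/
lemma concat_isPath_of_shortest {G : SimpleGraph V} (hT : G.IsTree) {r a b : V}
    (p : G.Walk r a) (hp : p.length = G.dist r a) (hab : G.Adj a b)
    (hd : G.dist r a ≤ G.dist r b) : (p.concat hab).IsPath := by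
  have hpp : p.IsPath := p.isPath_of_length_eq_dist hp
  have hb : b ∉ p.support := fun hbmem =>
    hab.ne (mem_support_shortest_eq hT.isConnected p hp hbmem hd).symm
  rw [← SimpleGraph.Walk.isPath_reverse_iff, SimpleGraph.Walk.reverse_concat,
    SimpleGraph.Walk.cons_isPath_iff]
  refine ⟨hpp.reverse, ?_⟩
  simpa using hb

/-- In a tree, adjacent vertices are at different distances from any root. -/
lemma tree_adj_dist_ne {G : SimpleGraph V} (hT : G.IsTree) (r : V) {a b : V}
    (hab : G.Adj a b) : G.dist r a ≠ G.dist r b := by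
  intro heq
  obtain ⟨p, hp⟩ := hT.isConnected.exists_walk_length_eq_dist r a
  obtain ⟨q, hq⟩ := hT.isConnected.exists_walk_length_eq_dist r b
  have hP : (p.concat hab).IsPath := concat_isPath_of_shortest hT p hp hab heq.le
  have hQ : q.IsPath := q.isPath_of_length_eq_dist hq
  obtain ⟨P, -, huniq⟩ := hT.existsUnique_path r b
  have h1 := huniq _ hP
  have h2 := huniq _ hQ
  have : (p.concat hab).length = q.length := by rw [h1, h2]
  rw [SimpleGraph.Walk.length_concat, hp, hq, heq] at this
  omega

/-- In a tree, the parent of a vertex is unique. -/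
lemma tree_parent_unique {G : SimpleGraph V} (hT : G.IsTree) (r : V) {x p1 p2 : V}
    (h1 : G.Adj p1 x) (h2 : G.Adj p2 x)
    (hd1 : G.dist r p1 + 1 = G.dist r x) (hd2 : G.dist r p2 + 1 = G.dist r x) :
    p1 = p2 := by
  obtain ⟨P1, hP1⟩ := hT.isConnected.exists_walk_length_eq_dist r p1
  obtain ⟨P2, hP2⟩ := hT.isConnected.exists_walk_length_eq_dist r p2
  have hQ1 : (P1.concat h1).IsPath := concat_isPath_of_shortest hT P1 hP1 h1 (by omega)
  have hQ2 : (P2.concat h2).IsPath := concat_isPath_of_shortest hT P2 hP2 h2 (by omega)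
  obtain ⟨P, -, huniq⟩ := hT.existsUnique_path r x
  have heq : (P1.concat h1) = (P2.concat h2) := by rw [huniq _ hQ1, huniq _ hQ2]
  have hmem : p1 ∈ (P1.concat h1).support := by
    rw [SimpleGraph.Walk.support_concat]
    simp [List.concat_eq_append]
  rw [heq, SimpleGraph.Walk.support_concat, List.mem_append] at hmem
  rcases hmem with hmem | hmem
  · exact mem_support_shortest_eq hT.isConnected P2 hP2 hmem
      (by rw [hP2] at *; omega)
  · simp only [List.mem_singleton] at hmem
    exact absurd hmem h1.ne
  

/-- Pushing a deepest vertex of a minimum leafless independent ve-dominating set up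
to its parent preserves all the properties, provided all other vertices of `S` are
at distance at least 3 from it. -/
theorem stmt4 (G : SimpleGraph V) [DecidableRel G.Adj] (hT : G.IsTree)
    (r : V) (h : ℕ) (hub : ∀ v, G.dist r v ≤ h) (hatt : ∃ v, G.dist r v = h)
    (h3 : 3 ≤ h) (S : Finset V)
    (hdom : IsVEDomSet G S) (hind : IsIndepSet G S) (hcard : S.card = iVE G)
    (hnoleaf : ∀ v ∈ S, G.degree v ≠ 1)
    (u : V) (huS : u ∈ S) (hdu : G.dist r u = h - 1)
    (hfar : ∀ v ∈ S, v ≠ u → 3 ≤ G.dist u v)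
    (w : V) (huw : G.Adj u w) (hdw : G.dist r w = h - 2) :
    IsVEDomSet G (insert w (S.erase u)) ∧ IsIndepSet G (insert w (S.erase u)) ∧
      (insert w (S.erase u)).card = iVE G ∧
      ∀ v ∈ insert w (S.erase u), G.degree v ≠ 1 := by
  have hc := hT.isConnected
  have hadjdist : ∀ {a b : V}, G.Adj a b → G.dist a b = 1 := fun hab =>
    SimpleGraph.dist_eq_one_iff_adj.2 hab
  have hwu : w ≠ u := huw.ne'
  have hwS : w ∉ S := by
    intro hwmem
    have h1 := hfar w hwmem hwu
    have h2 := hadjdist huw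
    omega
  have hnbr : ∀ {a b : V}, G.Adj a b →
      G.dist r b + 1 = G.dist r a ∨ G.dist r b = G.dist r a + 1 := by
    intro a b hab
    have h1 : G.dist r b ≤ G.dist r a + G.dist a b := hc.dist_triangle
    have h2 : G.dist r a ≤ G.dist r b + G.dist b a := hc.dist_triangle
    have h3 := hadjdist hab
    have h4 := hadjdist hab.symm
    have h5 := tree_adj_dist_ne hT r hab
    omega
  -- every edge ve-dominated by u is ve-dominated by w
  have key : ∀ a b : V, G.Adj a b → (a = u ∨ G.Adj u a) → veDominates G w s(a, b) := by
    intro a b hab hua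
    rcases hua with rfl | hua
    · exact ⟨a, Sym2.mem_mk_left a b, Or.inr huw.symm⟩
    · by_cases haw : a = w
      · exact ⟨a, Sym2.mem_mk_left a b, Or.inl haw⟩
      · -- a is a child of u, so dist r a = h
        have hda : G.dist r a = h := by
          rcases hnbr hua with h1 | h1
          · exact absurd (tree_parent_unique hT r hua.symm huw.symm h1 (by omega)) haw
          · omega
        -- b is at depth h - 1, hence b = u
        have hdb : G.dist r b + 1 = G.dist r a := by
          rcases hnbr hab with h1 | h1
          · exact h1
          · have := hub b; omega
        have hbu : u = b :=
          tree_parent_unique hT r hua hab.symm (by omega) (by omega)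
        exact ⟨b, Sym2.mem_mk_right a b, Or.inr (hbu ▸ huw.symm)⟩
  refine ⟨?_, ?_, ?_, ?_⟩
  · -- ve-domination
    intro e he
    induction e using Sym2.ind with
    | _ a b =>
      obtain ⟨v, hvS, x, hxe, hxv⟩ := hdom s(a, b) he
      by_cases hvu : v = u
      · subst hvu
        refine ⟨w, Finset.mem_insert_self _ _, ?_⟩
        rcases Sym2.mem_iff.1 hxe with rfl | rfl
        · exact key x b (G.mem_edgeSet.1 he) hxv
        · rw [Sym2.eq_swap]
          exact key x a (G.mem_edgeSet.1 he).symm hxv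
      · exact ⟨v, Finset.mem_insert_of_mem (Finset.mem_erase.2 ⟨hvu, hvS⟩),
          x, hxe, hxv⟩
  · -- independence
    intro x hx y hy hadj
    rcases Finset.mem_insert.1 hx with rfl | hx' <;>
      rcases Finset.mem_insert.1 hy with rfl | hy'
    · exact G.irrefl hadj
    · have hyS := Finset.mem_of_mem_erase hy'
      have hynu := (Finset.mem_erase.1 hy').1
      have h1 := hfar y hyS hynu
      have h2 : G.dist u y ≤ G.dist u x + G.dist x y := hc.dist_triangle
      have h3 := hadjdist huw
      have h4 := hadjdist hadj
      omega
    · have hxS := Finset.mem_of_mem_erase hx'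
      have hxnu := (Finset.mem_erase.1 hx').1
      have h1 := hfar x hxS hxnu
      have h2 : G.dist u x ≤ G.dist u y + G.dist y x := hc.dist_triangle
      have h3 := hadjdist huw
      have h4 := hadjdist hadj.symm
      omega
    · exact hind x (Finset.mem_of_mem_erase hx') y (Finset.mem_of_mem_erase hy') hadj
  · -- cardinality
    have hwE : w ∉ S.erase u := fun hw => hwS (Finset.mem_of_mem_erase hw)
    rw [Finset.card_insert_of_notMem hwE, Finset.card_erase_of_mem huS]
    have h1 : 1 ≤ S.card := Finset.card_pos.2 ⟨u, huS⟩
    omega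
  · -- no leaves
    intro v hv
    rcases Finset.mem_insert.1 hv with rfl | hv'
    · -- degree of w is at least 2
      obtain ⟨p, hp⟩ := hc.exists_walk_length_eq_dist r v
      have hplen : 0 < p.reverse.length := by
        have hh : p.reverse.length = p.length := SimpleGraph.Walk.length_reverse _
        omega
      obtain ⟨p0, hadj0, q, hq⟩ :=
        SimpleGraph.Walk.not_nil_iff.1
          (SimpleGraph.Walk.not_nil_iff_lt_length.2 hplen)
      have hqlen : q.length + 1 = p.length := by
        have := congr_arg SimpleGraph.Walk.length hq
        rw [SimpleGraph.Walk.length_reverse] at this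
        simpa using this.symm
      have hdp0 : G.dist r p0 ≤ q.length := by
        simpa using SimpleGraph.dist_le q.reverse
      have hp0u : p0 ≠ u := by
        intro hp0u
        subst hp0u
        omega
      have hmem1 : u ∈ G.neighborFinset v := by
        rw [SimpleGraph.mem_neighborFinset]; exact huw.symm
      have hmem2 : p0 ∈ G.neighborFinset v := by
        rw [SimpleGraph.mem_neighborFinset]; exact hadj0
      have : 1 < (G.neighborFinset v).card :=
        Finset.one_lt_card.2 ⟨u, hmem1, p0, hmem2, fun hh => hp0u hh.symm⟩
      rw [SimpleGraph.card_neighborFinset_eq_degree] at this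
      omega
    · exact hnoleaf v (Finset.mem_of_mem_erase hv')
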